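/- Let H, K be Hilbert spaces and R : K → H, E : H → H bounded linear operators. If there exists δ > 0 such that ‖R* x‖ ≥ δ ‖E* x‖ for all x ∈ H, then Range(E) ⊆ Range(R). -/

import Mathlib

theorem stmt14 {H K : Type*}
    [NormedAddCommGroup H] [InnerProductSpace ℂ H] [CompleteSpace H]
    [NormedAddCommGroup K] [InnerProductSpace ℂ K] [CompleteSpace K]
    (R : K →L[ℂ] H) (E : H →L[ℂ] H)
    (h : ∃ δ : ℝ, 0 < δ ∧ ∀ x : H,
      δ * ‖(ContinuousLinearMap.adjoint E) x‖ ≤ ‖(ContinuousLinearMap.adjoint R) x‖) :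
    Set.range E ⊆ Set.range R := by
  obtain ⟨δ, hδ, hmaj⟩ := h
  rintro y ⟨u, rfl⟩
  set A : H →ₗ[ℂ] K := (ContinuousLinearMap.adjoint R).toLinearMap with hA
  set B := (ContinuousLinearMap.adjoint E) with hB
  set φ : H →ₗ[ℂ] ℂ := (innerSL ℂ (E u)).toLinearMap with hφ
  have hφ_apply : ∀ z : H, φ z = inner ℂ u (B z) := by
    intro z
    simp only [hφ, ContinuousLinearMap.coe_coe, innerSL_apply_apply, hB,
      ContinuousLinearMap.adjoint_inner_right]
  have hker : LinearMap.ker A ≤ LinearMap.ker φ := by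
    intro z hz
    have hz' : A z = 0 := hz
    have hBz : B z = 0 := by
      have h1 := hmaj z
      have h2 : ‖(ContinuousLinearMap.adjoint R) z‖ = 0 := by
        rw [show (ContinuousLinearMap.adjoint R) z = A z from rfl, hz', norm_zero]
      have h3 : ‖B z‖ ≤ 0 := by nlinarith
      exact norm_le_zero_iff.mp h3
    simp only [LinearMap.mem_ker]
    rw [hφ_apply, hBz, inner_zero_right]
  -- the functional on range A
  set g0 : ↥(LinearMap.range A) →ₗ[ℂ] ℂ :=
    (Submodule.liftQ (LinearMap.ker A) φ hker).comp
      (LinearMap.quotKerEquivRange A).symm.toLinearMap with hg0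
  have hg0_apply : ∀ z : H, g0 ⟨A z, LinearMap.mem_range_self A z⟩ = φ z := by
    intro z
    have hsymm := LinearMap.quotKerEquivRange_symm_apply_image A z
      (LinearMap.mem_range_self A z)
    simp only [hg0, LinearMap.comp_apply, LinearEquiv.coe_toLinearMap, hsymm,
      Submodule.mkQ_apply, Submodule.liftQ_apply]
  have hbound : ∀ w : ↥(LinearMap.range A), ‖g0 w‖ ≤ (‖u‖ / δ) * ‖w‖ := by
    rintro ⟨w, z, hz⟩
    have hw : (⟨w, ⟨z, hz⟩⟩ : ↥(LinearMap.range A))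
        = ⟨A z, LinearMap.mem_range_self A z⟩ := by
      exact Subtype.ext hz.symm
    rw [hw, hg0_apply]
    have h1 : ‖φ z‖ ≤ ‖u‖ * ‖B z‖ := by
      rw [hφ_apply]
      exact norm_inner_le_norm u (B z)
    have h2 : ‖B z‖ ≤ ‖A z‖ / δ := by
      rw [le_div_iff₀ hδ]
      have h := hmaj z
      have hAz : ‖(ContinuousLinearMap.adjoint R) z‖ = ‖A z‖ := rfl
      linarith
    have hnorm : ‖(⟨A z, LinearMap.mem_range_self A z⟩ : ↥(LinearMap.range A))‖ = ‖A z‖ := rfl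
    rw [hnorm]
    calc ‖φ z‖ ≤ ‖u‖ * ‖B z‖ := h1
      _ ≤ ‖u‖ * (‖A z‖ / δ) := by
          exact mul_le_mul_of_nonneg_left h2 (norm_nonneg u)
      _ = (‖u‖ / δ) * ‖A z‖ := by ring
  set g1 : ↥(LinearMap.range A) →L[ℂ] ℂ :=
    LinearMap.mkContinuous g0 (‖u‖ / δ) hbound with hg1
  obtain ⟨g, hg_ext, -⟩ := exists_extension_norm_eq (LinearMap.range A) g1
  obtain ⟨x₀, hx₀⟩ := (InnerProductSpace.toDual ℂ K).surjective g
  refine ⟨x₀, ?_⟩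
  have key : ∀ z : H, (inner ℂ (R x₀) z : ℂ) = inner ℂ (E u) z := by
    intro z
    have h1 : g (A z) = φ z := by
      have := hg_ext ⟨A z, LinearMap.mem_range_self A z⟩
      rw [this]
      exact hg0_apply z
    have h2 : g (A z) = inner ℂ x₀ (A z) := by
      rw [← hx₀, InnerProductSpace.toDual_apply_apply]
    have h3 : (inner ℂ x₀ (A z) : ℂ) = inner ℂ (R x₀) z := by
      exact ContinuousLinearMap.adjoint_inner_right R x₀ z
    have h4 : φ z = inner ℂ (E u) z := by
      simp [hφ]
    rw [← h3, ← h2, h1, h4]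
  exact ext_inner_right ℂ key
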